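/- Let d ≥ 1 and γ, β_1, …, β_d ≥ 0, and let (q_i)_{i≥1} be any increasing sequence of reals greater than 1 tending to infinity. Then the set E := ⋂_{i≥1} ⋃_{H ∈ ℤ, 1 ≤ H ≤ q_i^γ} N_{1/q_i}( (1/(H q_i^{β_1}))ℤ × ⋯ × (1/(H q_i^{β_d}))ℤ ) satisfies dimH E ≤ min( (d+1)γ + Σ_{j=1}^d β_j, d ). -/

import Mathlib

open MeasureTheory Metric Set Filter Topology
open scoped ENNReal

/-- The scaled integer lattice `cℤ = {c m : m ∈ ℤ} ⊆ ℝ`. -/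
def latticeSet (c : ℝ) : Set ℝ := {x : ℝ | ∃ m : ℤ, x = c * m}

lemma coord_dist_le {d : ℕ} (x y : EuclideanSpace ℝ (Fin d)) (j : Fin d) :
    dist (x j) (y j) ≤ dist x y := by
  rw [EuclideanSpace.dist_eq]
  calc dist (x j) (y j) = Real.sqrt (dist (x j) (y j) ^ 2) := (Real.sqrt_sq dist_nonneg).symm
    _ ≤ _ := Real.sqrt_le_sqrt
        (Finset.single_le_sum (f := fun i => dist (x i) (y i) ^ 2)
          (fun i _ => sq_nonneg _) (Finset.mem_univ j))

theorem stmt1 (d : ℕ) (hd : 1 ≤ d) (γ : ℝ) (β : Fin d → ℝ)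
    (hγ : 0 ≤ γ) (hβ : ∀ j, 0 ≤ β j)
    (q : ℕ → ℝ) (hq1 : ∀ i, 1 < q i) (hmono : StrictMono q)
    (hlim : Tendsto q atTop atTop) :
    dimH (⋂ i : ℕ, ⋃ H : ℤ, ⋃ _ : 1 ≤ H ∧ (H : ℝ) ≤ q i ^ γ,
        cthickening (1 / q i)
          {x : EuclideanSpace ℝ (Fin d) |
            ∀ j : Fin d, x j ∈ latticeSet (1 / (H * q i ^ β j))})
      ≤ ENNReal.ofReal (min ((d + 1) * γ + ∑ j, β j) d) := by
  have hq0 : ∀ i, (0:ℝ) < q i := fun i => lt_trans one_pos (hq1 i)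
  set s₀ : ℝ := (↑d + 1) * γ + ∑ j, β j with hs₀def
  have hs₀0 : 0 ≤ s₀ :=
    add_nonneg (mul_nonneg (by positivity) hγ) (Finset.sum_nonneg fun j _ => hβ j)
  set E : Set (EuclideanSpace ℝ (Fin d)) :=
    ⋂ i : ℕ, ⋃ H : ℤ, ⋃ _ : 1 ≤ H ∧ (H : ℝ) ≤ q i ^ γ,
        cthickening (1 / q i)
          {x : EuclideanSpace ℝ (Fin d) |
            ∀ j : Fin d, x j ∈ latticeSet (1 / (H * q i ^ β j))} with hEdef
  have h2 : dimH E ≤ (d : ℝ≥0∞) := by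
    calc dimH E ≤ dimH (univ : Set (EuclideanSpace ℝ (Fin d))) := dimH_mono (subset_univ _)
      _ = (Module.finrank ℝ (EuclideanSpace ℝ (Fin d)) : ℝ≥0∞) :=
          Real.dimH_univ_eq_finrank _
      _ = (d : ℝ≥0∞) := by simp
  -- the key covering estimate
  have key : ∀ (N : ℕ) (t : ℝ), s₀ < t →
      μH[t] (E ∩ closedBall (0 : EuclideanSpace ℝ (Fin d)) N) = 0 := by
    intro N t ht
    have ht0 : 0 ≤ t := le_trans hs₀0 ht.le
    set M : ℕ → Fin d → ℝ := fun n j => ((N:ℝ) + 2) * q n ^ (γ + β j) with hM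
    have hM2 : ∀ n j, (2:ℝ) ≤ M n j := by
      intro n j
      have h1 : (1:ℝ) ≤ q n ^ (γ + β j) :=
        Real.one_le_rpow (hq1 n).le (add_nonneg hγ (hβ j))
      have hN0 : (0:ℝ) ≤ (N:ℝ) := Nat.cast_nonneg N
      simp only [hM]
      nlinarith
    set A : ℕ → Finset (ℤ × (Fin d → ℤ)) := fun n =>
      Finset.Icc 1 ⌈q n ^ γ⌉ ×ˢ
        Finset.Icc (fun j => -⌈M n j⌉) (fun j => ⌈M n j⌉) with hA
    set cen : ℕ → ℤ → (Fin d → ℤ) → EuclideanSpace ℝ (Fin d) := fun n H m =>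
      WithLp.toLp 2 (fun j => 1 / ((H:ℝ) * q n ^ β j) * (m j : ℝ)) with hcen
    set C : ℝ := 2 * 5 ^ d * ((N:ℝ) + 2) ^ d with hC
    have hCpos : 0 < C := by positivity
    -- diameters
    have hdiam : ∀ n (H : ℤ) (m : Fin d → ℤ),
        EMetric.diam (closedBall (cen n H m) (2 / q n)) ≤ ENNReal.ofReal (4 / q n) := by
      intro n H m
      refine EMetric.diam_le fun a ha b hb => ?_
      rw [edist_dist]
      refine ENNReal.ofReal_le_ofReal ?_
      have h1 := mem_closedBall.mp ha
      have h2 := mem_closedBall.mp hb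
      have := dist_triangle_right a b (cen n H m)
      have h4 : (4:ℝ) / q n = 2 / q n + 2 / q n := by ring
      linarith
    -- cardinality bound
    have hcard : ∀ n, ((A n).card : ℝ) ≤ C * q n ^ s₀ := by
      intro n
      have hqγ1 : (1:ℝ) ≤ q n ^ γ := Real.one_le_rpow (hq1 n).le hγ
      have hcardA : (A n).card = (Finset.Icc 1 ⌈q n ^ γ⌉).card *
          (Finset.Icc (fun j => -⌈M n j⌉) (fun j => ⌈M n j⌉)).card := by
        rw [hA]; exact Finset.card_product _ _
      have hc1 : ((Finset.Icc (1:ℤ) ⌈q n ^ γ⌉).card : ℝ) ≤ 2 * q n ^ γ := by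
        rw [Int.card_Icc]
        have hone : (1:ℤ) ≤ ⌈q n ^ γ⌉ := Int.one_le_ceil_iff.mpr (by linarith)
        have hcast : (((⌈q n ^ γ⌉ + 1 - 1).toNat : ℕ) : ℝ) = (⌈q n ^ γ⌉ : ℝ) := by
          have h' : ⌈q n ^ γ⌉ + 1 - 1 = ⌈q n ^ γ⌉ := by ring
          rw [h']
          exact_mod_cast Int.toNat_of_nonneg (by omega)
        rw [hcast]
        have := Int.ceil_lt_add_one (q n ^ γ)
        have h2 : (⌈q n ^ γ⌉ : ℝ) < q n ^ γ + 1 := by exact_mod_cast this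
        linarith
      have hc2 : ((Finset.Icc (fun j => -⌈M n j⌉) (fun j : Fin d => ⌈M n j⌉)).card : ℝ)
          ≤ ∏ j, (5 * M n j) := by
        rw [Pi.card_Icc]
        push_cast
        refine Finset.prod_le_prod (fun j _ => by positivity) (fun j _ => ?_)
        rw [Int.card_Icc]
        have hMj := hM2 n j
        have hceil : (2:ℤ) ≤ ⌈M n j⌉ := by
          have : ((2:ℤ):ℝ) ≤ M n j := by exact_mod_cast hMj
          exact_mod_cast le_trans this (Int.le_ceil _)
        have hcast : (((⌈M n j⌉ + 1 - -⌈M n j⌉).toNat : ℕ) : ℝ) = 2 * (⌈M n j⌉ : ℝ) + 1 := by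
          have h' : ⌈M n j⌉ + 1 - -⌈M n j⌉ = 2 * ⌈M n j⌉ + 1 := by ring
          rw [h']
          have := Int.toNat_of_nonneg (show (0:ℤ) ≤ 2 * ⌈M n j⌉ + 1 by omega)
          exact_mod_cast congrArg (Int.cast : ℤ → ℝ) this
        rw [hcast]
        have h2 : (⌈M n j⌉ : ℝ) < M n j + 1 := Int.ceil_lt_add_one _
        linarith
      have hprod : ∏ j, (5 * M n j) = 5 ^ d * ((N:ℝ) + 2) ^ d * q n ^ (d * γ + ∑ j, β j) := by
        have : ∏ j : Fin d, (5 * M n j)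
            = ∏ j : Fin d, (5 * ((N:ℝ) + 2)) * q n ^ (γ + β j) := by
          refine Finset.prod_congr rfl fun j _ => ?_
          rw [hM]; ring
        rw [this, Finset.prod_mul_distrib, Finset.prod_const,
          ← Real.rpow_sum_of_pos (hq0 n)]
        have hsum : ∑ j : Fin d, (γ + β j) = d * γ + ∑ j, β j := by
          rw [Finset.sum_add_distrib, Finset.sum_const, Finset.card_univ, Fintype.card_fin,
            nsmul_eq_mul]
        rw [hsum, Finset.card_univ, Fintype.card_fin, mul_pow]
      calc ((A n).card : ℝ)
          = ((Finset.Icc (1:ℤ) ⌈q n ^ γ⌉).card : ℝ) *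
            ((Finset.Icc (fun j => -⌈M n j⌉) (fun j : Fin d => ⌈M n j⌉)).card : ℝ) := by
            rw [hcardA]; push_cast; ring
        _ ≤ (2 * q n ^ γ) * ∏ j, (5 * M n j) := by
            refine mul_le_mul hc1 hc2 (by positivity)
              (mul_nonneg (by norm_num) (Real.rpow_nonneg (hq0 n).le _))
        _ = C * q n ^ s₀ := by
            rw [hprod, hC, hs₀def,
              show (↑d + 1) * γ + ∑ j, β j = γ + ((d : ℝ) * γ + ∑ j, β j) by ring,
              Real.rpow_add (hq0 n) γ ((d : ℝ) * γ + ∑ j, β j)]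
            ring
    -- covering property
    have hst : ∀ n, E ∩ closedBall (0 : EuclideanSpace ℝ (Fin d)) N ⊆
        ⋃ p : (A n : Finset (ℤ × (Fin d → ℤ))), closedBall (cen n p.1.1 p.1.2) (2 / q n) := by
      intro n x hx
      have hxE := hx.1
      rw [hEdef, mem_iInter] at hxE
      have hxn := hxE n
      simp only [mem_iUnion] at hxn
      obtain ⟨H, hH, hxc⟩ := hxn
      rw [mem_cthickening_iff] at hxc
      have hHpos : (0:ℝ) < (H:ℝ) := by exact_mod_cast hH.1
      have hinf : EMetric.infEdist x
          {z : EuclideanSpace ℝ (Fin d) | ∀ j, z j ∈ latticeSet (1 / (H * q n ^ β j))}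
          < ENNReal.ofReal (2 / q n) := by
        refine lt_of_le_of_lt hxc ?_
        refine ENNReal.ofReal_lt_ofReal_iff (div_pos two_pos (hq0 n)) |>.mpr ?_
        rw [div_lt_div_iff_of_pos_right (hq0 n)]
        norm_num
      obtain ⟨y, hyL, hxy⟩ := EMetric.infEdist_lt_iff.mp hinf
      have hdist : dist x y < 2 / q n := by
        rw [edist_dist] at hxy
        exact (ENNReal.ofReal_lt_ofReal_iff (div_pos two_pos (hq0 n))).mp hxy
      choose m hm using hyL
      have hy_eq : y = cen n H m := by
        refine PiLp.ext fun j => ?_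
        rw [hcen]
        exact hm j
      -- bounds on m
      have hmbound : ∀ j, |(m j : ℝ)| ≤ M n j := by
        intro j
        have hcpos : (0:ℝ) < (H:ℝ) * q n ^ β j :=
          mul_pos hHpos (Real.rpow_pos_of_pos (hq0 n) _)
        have hyj : (m j : ℝ) = y j * ((H:ℝ) * q n ^ β j) := by
          rw [hm j]; field_simp; rw [mul_div_cancel_right₀ _ (Real.rpow_pos_of_pos (hq0 n) _).ne']
        have hxN : dist x (0 : EuclideanSpace ℝ (Fin d)) ≤ N := mem_closedBall.mp hx.2
        have hxj : |x j| ≤ (N:ℝ) := by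
          have h := coord_dist_le x (0 : EuclideanSpace ℝ (Fin d)) j
          have h0 : (0 : EuclideanSpace ℝ (Fin d)) j = 0 := rfl
          rw [h0, Real.dist_eq, sub_zero] at h
          linarith
        have hyxj : |y j - x j| ≤ 2 / q n := by
          have h := coord_dist_le x y j
          rw [Real.dist_eq] at h
          have : |y j - x j| = |x j - y j| := abs_sub_comm _ _
          linarith
        have h2q : 2 / q n ≤ 2 := by
          rw [div_le_iff₀ (hq0 n)]
          nlinarith [hq1 n]
        have hyjb : |y j| ≤ (N:ℝ) + 2 := by
          have : |y j| ≤ |x j| + |y j - x j| := by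
            calc |y j| = |x j + (y j - x j)| := by ring_nf
              _ ≤ |x j| + |y j - x j| := abs_add_le _ _
          linarith
        have hcle : (H:ℝ) * q n ^ β j ≤ q n ^ (γ + β j) := by
          rw [Real.rpow_add (hq0 n)]
          exact mul_le_mul_of_nonneg_right hH.2 (Real.rpow_nonneg (hq0 n).le _)
        calc |(m j : ℝ)| = |y j| * ((H:ℝ) * q n ^ β j) := by
              rw [hyj, abs_mul, abs_of_pos hcpos]
          _ ≤ ((N:ℝ) + 2) * q n ^ (γ + β j) := by
              refine mul_le_mul hyjb hcle hcpos.le (by positivity)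
          _ = M n j := rfl
      have hmemA : (H, m) ∈ A n := by
        rw [hA, Finset.mem_product]
        constructor
        · rw [Finset.mem_Icc]
          refine ⟨hH.1, ?_⟩
          have : (H:ℝ) ≤ (⌈q n ^ γ⌉ : ℝ) := le_trans hH.2 (Int.le_ceil _)
          exact_mod_cast this
        · rw [Finset.mem_Icc]
          constructor <;> (intro j; have hj := abs_le.mp (hmbound j))
          · have : -(⌈M n j⌉ : ℝ) ≤ (m j : ℝ) := by
              have := Int.le_ceil (M n j)
              linarith [hj.1]
            exact_mod_cast this
          · have : (m j : ℝ) ≤ (⌈M n j⌉ : ℝ) := le_trans hj.2 (Int.le_ceil _)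
            exact_mod_cast this
      refine mem_iUnion.mpr ⟨⟨(H, m), hmemA⟩, ?_⟩
      rw [mem_closedBall, ← hy_eq]
      exact hdist.le
    -- apply the liminf bound
    have happ := Measure.hausdorffMeasure_le_liminf_sum (ι := fun n => (A n : Finset (ℤ × (Fin d → ℤ))))
        t (E ∩ closedBall (0 : EuclideanSpace ℝ (Fin d)) N)
        (fun n => ENNReal.ofReal (4 / q n))
        (by
          have h0 : Tendsto (fun n => (4:ℝ) / q n) atTop (𝓝 0) :=
            tendsto_const_nhds.div_atTop hlim
          simpa using ENNReal.tendsto_ofReal h0)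
        (fun n p => closedBall (cen n p.1.1 p.1.2) (2 / q n))
        (Eventually.of_forall fun n p => hdiam n p.1.1 p.1.2)
        (Eventually.of_forall hst)
    refine le_antisymm ?_ (zero_le)
    refine le_trans happ ?_
    have hbound : ∀ n, (∑ p : (A n : Finset (ℤ × (Fin d → ℤ))),
        EMetric.diam (closedBall (cen n p.1.1 p.1.2) (2 / q n)) ^ t)
        ≤ ENNReal.ofReal (C * q n ^ s₀ * (4 / q n) ^ t) := by
      intro n
      have hterm : ∀ p : (A n : Finset (ℤ × (Fin d → ℤ))),
          EMetric.diam (closedBall (cen n p.1.1 p.1.2) (2 / q n)) ^ t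
          ≤ ENNReal.ofReal ((4 / q n) ^ t) := by
        intro p
        rw [← ENNReal.ofReal_rpow_of_pos (div_pos (by norm_num) (hq0 n))]
        exact ENNReal.rpow_le_rpow (hdiam n p.1.1 p.1.2) ht0
      calc (∑ p : (A n : Finset (ℤ × (Fin d → ℤ))),
            EMetric.diam (closedBall (cen n p.1.1 p.1.2) (2 / q n)) ^ t)
          ≤ (Finset.univ : Finset (A n : Finset (ℤ × (Fin d → ℤ)))).card
            • ENNReal.ofReal ((4 / q n) ^ t) :=
            Finset.sum_le_card_nsmul _ _ _ (fun p _ => hterm p)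
        _ = ((A n).card : ℝ≥0∞) * ENNReal.ofReal ((4 / q n) ^ t) := by
            rw [Finset.card_univ, Fintype.card_coe, nsmul_eq_mul]
        _ ≤ ENNReal.ofReal (C * q n ^ s₀) * ENNReal.ofReal ((4 / q n) ^ t) := by
            refine mul_le_mul' ?_ le_rfl
            rw [← ENNReal.ofReal_natCast]
            exact ENNReal.ofReal_le_ofReal (hcard n)
        _ = ENNReal.ofReal (C * q n ^ s₀ * (4 / q n) ^ t) := by
            rw [← ENNReal.ofReal_mul (mul_nonneg hCpos.le (Real.rpow_nonneg (hq0 n).le _))]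
    refine le_trans (liminf_le_liminf (Eventually.of_forall hbound)) ?_
    have heq : ∀ n, C * q n ^ s₀ * (4 / q n) ^ t = (C * 4 ^ t) * q n ^ (s₀ - t) := by
      intro n
      rw [Real.div_rpow (by norm_num) (hq0 n).le, Real.rpow_sub (hq0 n)]
      ring
    have h2' : Tendsto (fun x : ℝ => x ^ (s₀ - t)) atTop (𝓝 0) := by
      have h := tendsto_rpow_neg_atTop (y := t - s₀) (by linarith)
      simpa [neg_sub] using h
    have h3 : Tendsto (fun n => (C * 4 ^ t) * q n ^ (s₀ - t)) atTop (𝓝 0) := by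
      have := (h2'.comp hlim).const_mul (C * 4 ^ t)
      simpa using this
    have h4 : Tendsto (fun n => ENNReal.ofReal (C * q n ^ s₀ * (4 / q n) ^ t)) atTop (𝓝 0) := by
      simp only [heq]
      simpa using ENNReal.tendsto_ofReal h3
    exact le_of_eq h4.liminf_eq
  -- derive the dimension bound
  have h1 : dimH E ≤ ENNReal.ofReal s₀ := by
    have hEU : E = ⋃ N : ℕ, E ∩ closedBall (0 : EuclideanSpace ℝ (Fin d)) N := by
      ext x
      simp only [mem_iUnion, mem_inter_iff, mem_closedBall]
      constructor
      · intro hx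
        obtain ⟨N, hN⟩ := exists_nat_ge (dist x 0)
        exact ⟨N, hx, hN⟩
      · rintro ⟨N, hN, _⟩
        exact hN
    conv_lhs => rw [hEU]
    rw [dimH_iUnion]
    refine iSup_le fun N => ?_
    refine dimH_le fun d' hd' => ?_
    by_contra hcon
    have hlt : s₀ < (d' : ℝ) := by
      have h := lt_of_not_ge hcon
      rw [← ENNReal.ofReal_coe_nnreal] at h
      exact (ENNReal.ofReal_lt_ofReal_iff_of_nonneg hs₀0).mp h
    have h0 := key N (d' : ℝ) hlt
    rw [h0] at hd'
    exact ENNReal.zero_ne_top hd'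
  rcases le_total s₀ (d : ℝ) with h | h
  · rw [min_eq_left h]
    exact h1
  · rw [min_eq_right h]
    calc dimH E ≤ (d : ℝ≥0∞) := h2
      _ = ENNReal.ofReal (d : ℝ) := by rw [ENNReal.ofReal_natCast]
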